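/- arXiv:1812.10792 — 4 statements merged into one kernel-verified Lean document; each statement's English description precedes it below -/
import Mathlib

section
/- Let T be Erlang-distributed with shape N and rate λ > 0, and define λ' = (T/θ)·λ for a constant θ > 0. Then λ' is Erlang-distributed with shape N and rate θ; in particular, the distribution of λ' does not depend on λ. -/
open MeasureTheory ProbabilityTheory Set
open scoped ENNReal

lemma withDensity_map_mul_right (h : ℝ → ℝ≥0∞) (hm : Measurable h) {c : ℝ} (hc : c ≠ 0) :
    (volume.withDensity h).map (fun x => x * c) =
      volume.withDensity (fun y => ENNReal.ofReal |c⁻¹| * h (y / c)) := by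
  have hmc : Measurable (fun x : ℝ => x * c) := measurable_id.mul_const c
  ext s hs
  rw [Measure.map_apply hmc hs, withDensity_apply _ (hmc hs), withDensity_apply _ hs]
  have key : (volume : Measure ℝ) = ENNReal.ofReal |c| • (volume.map (fun x : ℝ => x * c)) :=
    (Real.smul_map_volume_mul_right hc).symm
  conv_rhs => rw [key]
  rw [Measure.restrict_smul, lintegral_smul_measure,
    setLIntegral_map hs (by fun_prop) hmc]
  simp only [mul_div_cancel_right₀ _ hc]
  rw [lintegral_const_mul _ hm, smul_eq_mul, ← mul_assoc, ← ENNReal.ofReal_mul (abs_nonneg _),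
    ← abs_mul, mul_inv_cancel₀ hc, abs_one, ENNReal.ofReal_one, one_mul]

/-- If T ~ Erlang(N, λ) and λ' = (T/θ)·λ, then λ' ~ Erlang(N, θ):
the law of the rescaled variable does not depend on λ. -/
theorem erlang_rescale (N : ℕ) (hN : 0 < N) (l θ : ℝ) (hl : 0 < l) (hθ : 0 < θ) :
    (gammaMeasure N l).map (fun t => t / θ * l) = gammaMeasure N θ := by
  have hc : (0:ℝ) < l / θ := div_pos hl hθ
  have hfun : (fun t : ℝ => t / θ * l) = fun t : ℝ => t * (l / θ) := by
    funext t; ring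
  have hpdf : Measurable (gammaPDF (N:ℝ) l) := (measurable_gammaPDFReal _ _).ennreal_ofReal
  rw [hfun, gammaMeasure, gammaMeasure, withDensity_map_mul_right _ hpdf hc.ne']
  congr 1
  funext y
  have habs : |(l / θ)⁻¹| = θ / l := by
    rw [abs_of_pos (inv_pos.mpr hc), inv_div]
  rw [habs]
  have hyc : y / (l / θ) = y * θ / l := by field_simp
  rcases lt_or_ge y 0 with hy | hy
  · have h1 : y / (l / θ) < 0 := div_neg_of_neg_of_pos hy hc
    rw [gammaPDF_of_neg h1, gammaPDF_of_neg hy, mul_zero]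
  · have h1 : 0 ≤ y / (l / θ) := div_nonneg hy hc.le
    rw [gammaPDF_of_nonneg h1, gammaPDF_of_nonneg hy,
      ← ENNReal.ofReal_mul (div_nonneg hθ.le hl.le)]
    congr 1
    have hexp : l * (y / (l / θ)) = θ * y := by field_simp
    rw [hexp, hyc]
    have hrw : y * θ / l = y * (θ / l) := by ring
    rw [hrw, Real.mul_rpow hy (div_nonneg hθ.le hl.le),
      Real.rpow_sub (div_pos hθ hl), Real.rpow_one,
      Real.div_rpow hθ.le hl.le]
    have hΓ : Real.Gamma (N : ℝ) ≠ 0 :=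
      (Real.Gamma_pos_of_pos (by exact_mod_cast hN)).ne'
    have hlN : l ^ (N : ℝ) ≠ 0 := (Real.rpow_pos_of_pos hl _).ne'
    field_simp
end

section
/- In the Bitcoin retargeting model with constant hashrate (δ = 1), the expected blocktime after the first retargeting period is (N/(N-1))·β, which is strictly greater than the target β for every integer N > 1. -/
open MeasureTheory Real Set Filter Topology

lemma lomax_mean (N : ℕ) (hN : 1 < N) (θ : ℝ) (hθ : 0 < θ) :
    (∫ x in Ioi (0:ℝ), x * (N * θ ^ N / (x + θ) ^ (N + 1))) = θ / (N - 1) := by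
  have hN1 : (1:ℝ) < (N:ℝ) := by exact_mod_cast hN
  have hN0 : (N:ℝ) ≠ 0 := by positivity
  have hNm1 : (N:ℝ) - 1 ≠ 0 := by linarith
  set F : ℝ → ℝ := fun x =>
    (N:ℝ) * θ ^ N * (θ * (x + θ) ^ (-(N:ℝ)) / N - (x + θ) ^ ((1:ℝ) - N) / ((N:ℝ) - 1)) with hF
  have hderiv : ∀ x ∈ Ici (0:ℝ), HasDerivAt F (x * (N * θ ^ N / (x + θ) ^ (N + 1))) x := by
    intro x hx
    have hs : 0 < x + θ := by simp only [mem_Ici] at hx; linarith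
    have hsne : x + θ ≠ 0 := ne_of_gt hs
    have h1 : HasDerivAt (fun y : ℝ => y + θ) 1 x := (hasDerivAt_id x).add_const θ
    have h2 : HasDerivAt (fun y : ℝ => (y + θ) ^ (-(N:ℝ)))
        (1 * (-(N:ℝ)) * (x + θ) ^ (-(N:ℝ) - 1)) x := h1.rpow_const (Or.inl hsne)
    have h3 : HasDerivAt (fun y : ℝ => (y + θ) ^ ((1:ℝ) - N))
        (1 * ((1:ℝ) - N) * (x + θ) ^ ((1:ℝ) - N - 1)) x := h1.rpow_const (Or.inl hsne)
    have h4 := (((h2.const_mul θ).div_const (N:ℝ)).sub (h3.div_const ((N:ℝ) - 1))).const_mul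
      ((N:ℝ) * θ ^ N)
    refine h4.congr_deriv ?_
    symm
    have e1 : (x + θ) ^ ((1:ℝ) - (N:ℝ) - 1) = (x + θ) ^ (-(N:ℝ) - 1) * (x + θ) := by
      rw [show ((1:ℝ) - (N:ℝ) - 1) = (-(N:ℝ) - 1) + 1 by ring, Real.rpow_add_one hsne]
    have e3 : ((x + θ) ^ (N + 1) : ℝ) = ((x + θ) ^ (-(N:ℝ) - 1))⁻¹ := by
      rw [show (-(N:ℝ) - 1) = -((N:ℝ) + 1) by ring, Real.rpow_neg hs.le, inv_inv,
        ← Real.rpow_natCast (x + θ) (N + 1)]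
      push_cast
      ring_nf
    rw [e1, e3]
    have ht : (0:ℝ) < (x + θ) ^ (-(N:ℝ) - 1) := Real.rpow_pos_of_pos hs _
    field_simp
    ring
  have hnonneg : ∀ x ∈ Ioi (0:ℝ), 0 ≤ x * (N * θ ^ N / (x + θ) ^ (N + 1)) := by
    intro x hx
    simp only [mem_Ioi] at hx
    positivity
  have hg : Tendsto F atTop (𝓝 0) := by
    have hshift : Tendsto (fun x : ℝ => x + θ) atTop atTop :=
      tendsto_atTop_add_const_right _ θ tendsto_id
    have t1 : Tendsto (fun x : ℝ => (x + θ) ^ (-(N:ℝ))) atTop (𝓝 0) :=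
      (tendsto_rpow_neg_atTop (by positivity)).comp hshift
    have t2 : Tendsto (fun x : ℝ => (x + θ) ^ ((1:ℝ) - N)) atTop (𝓝 0) := by
      have := (tendsto_rpow_neg_atTop (y := (N:ℝ) - 1) (by linarith)).comp hshift
      simpa [show -((N:ℝ) - 1) = (1:ℝ) - N by ring, Function.comp_def] using this
    have := (((t1.const_mul θ).div_const (N:ℝ)).sub (t2.div_const ((N:ℝ) - 1))).const_mul
      ((N:ℝ) * θ ^ N)
    simpa [hF] using this
  rw [integral_Ioi_of_hasDerivAt_of_nonneg' hderiv hnonneg hg]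
  have hθne : (θ:ℝ) ^ N ≠ 0 := by positivity
  have g1 : θ ^ (-(N:ℝ)) = ((θ:ℝ) ^ N)⁻¹ := by
    rw [← Real.rpow_natCast θ N, ← Real.rpow_neg hθ.le]
  have g2 : θ ^ ((1:ℝ) - N) = θ * ((θ:ℝ) ^ N)⁻¹ := by
    rw [show (1:ℝ) - N = 1 + (-(N:ℝ)) by ring, Real.rpow_add hθ, Real.rpow_one, g1]
  simp only [hF, zero_add, g1, g2]
  field_simp
  ring

open MeasureTheory Real Set

/-- With constant hashrate (δ = 1, so θ = Nβ), the expected blocktime after the first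
retargeting period is (N/(N-1))β > β for every integer N > 1. -/
theorem retarget_mean_blocktime (N : ℕ) (hN : 1 < N) (β : ℝ) (hβ : 0 < β) :
    (∫ x in Ioi (0:ℝ), x * (N * (N * β) ^ N / (x + N * β) ^ (N + 1)))
      = (N / (N - 1)) * β ∧
    (N / (N - 1) : ℝ) * β > β := by
  have hN1 : (1:ℝ) < (N:ℝ) := by exact_mod_cast hN
  have hNm1 : (0:ℝ) < (N:ℝ) - 1 := by linarith
  constructor
  · rw [lomax_mean N hN (N * β) (by positivity)]
    field_simp
  · rw [gt_iff_lt]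
    rw [show (N / (N - 1) : ℝ) * β = β * (N / (N-1)) by ring]
    nth_rewrite 1 [show (β:ℝ) = β * 1 by ring]
    apply mul_lt_mul_of_pos_left _ hβ
    rw [lt_div_iff₀ hNm1]
    linarith
end

section
/- In the Bitcoin retargeting model, the variance of a blocktime after the first retargeting period equals N³β²/((N-1)²(N-2)δ²), which for δ = 1 strictly exceeds β² (the variance under constant difficulty) for all integers N > 2. -/
open MeasureTheory Real Set

lemma coe_addRight (d : ℝ) : ⇑(MeasurableEquiv.addRight d) = (fun x : ℝ => x + d) := rfl

lemma map_shift (c d : ℝ) :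
    Measure.map (· + d) (volume.restrict (Ioi c)) = volume.restrict (Ioi (c + d)) := by
  have h : Ioi c = (· + d) ⁻¹' (Ioi (c + d)) := by ext x; simp
  rw [h, ← coe_addRight d, ← (MeasurableEquiv.addRight d).measurableEmbedding.restrict_map,
    coe_addRight, map_add_right_eq_self]

lemma aux_int (θ : ℝ) (hθ : 0 < θ) (k : ℕ) :
    IntegrableOn (fun x => ((x + θ) ^ (k + 2))⁻¹) (Ioi (0:ℝ)) := by
  have h : IntegrableOn (fun u : ℝ => u ^ (-(k + 2 : ℝ))) (Ioi θ) :=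
    integrableOn_Ioi_rpow_of_lt (by linarith [Nat.cast_nonneg (α := ℝ) k]) hθ
  rw [IntegrableOn, show Ioi θ = Ioi ((0:ℝ) + θ) by rw [zero_add], ← map_shift,
    ← coe_addRight θ,
    (MeasurableEquiv.addRight θ).measurableEmbedding.integrable_map_iff] at h
  refine h.congr ?_
  filter_upwards [ae_restrict_mem measurableSet_Ioi] with x hx
  have hx0 := mem_Ioi.mp hx
  have hx' : 0 < x + θ := by linarith
  simp only [Function.comp, coe_addRight]
  rw [show (-(k + 2 : ℝ)) = -((k + 2 : ℕ) : ℝ) by push_cast; ring,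
    rpow_neg hx'.le, rpow_natCast]

lemma aux_eq (θ : ℝ) (hθ : 0 < θ) (k : ℕ) :
    ∫ x in Ioi (0:ℝ), ((x + θ) ^ (k + 2))⁻¹ = (θ ^ (k + 1))⁻¹ / (k + 1) := by
  have h1 : ∫ x in Ioi (0:ℝ), ((x + θ) ^ (k + 2))⁻¹
      = ∫ x in Ioi (0:ℝ), (x + θ) ^ (-(k + 2 : ℝ)) := by
    refine setIntegral_congr_fun measurableSet_Ioi fun x hx => ?_
    have hx0 := mem_Ioi.mp hx
    have hx' : 0 < x + θ := by linarith
    rw [show (-(k + 2 : ℝ)) = -((k + 2 : ℕ) : ℝ) by push_cast; ring,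
      rpow_neg hx'.le, rpow_natCast]
  have h2 : ∫ x in Ioi (0:ℝ), (x + θ) ^ (-(k + 2 : ℝ))
      = ∫ u in Ioi θ, u ^ (-(k + 2 : ℝ)) := by
    rw [show Ioi θ = Ioi ((0:ℝ) + θ) by rw [zero_add], ← map_shift, ← coe_addRight θ,
      (MeasurableEquiv.addRight θ).measurableEmbedding.integral_map]
    rfl
  rw [h1, h2, integral_Ioi_rpow_of_lt (by linarith [Nat.cast_nonneg (α := ℝ) k]) hθ,
    show (-(k + 2 : ℝ) + 1) = -((k + 1 : ℕ) : ℝ) by push_cast; ring,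
    rpow_neg hθ.le, rpow_natCast]
  push_cast
  rw [neg_div_neg_eq]

lemma first_moment (m : ℕ) (θ C : ℝ) (hθ : 0 < θ) :
    ∫ x in Ioi (0:ℝ), x * (C / (x + θ) ^ (m + 4))
      = C * ((θ ^ (m + 2))⁻¹ / (m + 2) - θ * ((θ ^ (m + 3))⁻¹ / (m + 3))) := by
  have h1 : ∀ x ∈ Ioi (0:ℝ), x * (C / (x + θ) ^ (m + 4))
      = C * (((x + θ) ^ (m + 1 + 2))⁻¹ - θ * ((x + θ) ^ (m + 2 + 2))⁻¹) := by
    intro x hx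
    have hx0 := mem_Ioi.mp hx
    have hx' : x + θ ≠ 0 := by positivity
    field_simp
    ring
  rw [setIntegral_congr_fun measurableSet_Ioi h1, integral_const_mul,
    integral_sub (aux_int θ hθ (m + 1)) ((aux_int θ hθ (m + 2)).const_mul θ),
    integral_const_mul, aux_eq θ hθ (m + 1), aux_eq θ hθ (m + 2)]
  push_cast
  ring_nf

lemma second_moment (m : ℕ) (θ C : ℝ) (hθ : 0 < θ) :
    ∫ x in Ioi (0:ℝ), x ^ 2 * (C / (x + θ) ^ (m + 4))
      = C * ((θ ^ (m + 1))⁻¹ / (m + 1) - 2 * θ * ((θ ^ (m + 2))⁻¹ / (m + 2))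
          + θ ^ 2 * ((θ ^ (m + 3))⁻¹ / (m + 3))) := by
  have h1 : ∀ x ∈ Ioi (0:ℝ), x ^ 2 * (C / (x + θ) ^ (m + 4))
      = C * (((x + θ) ^ (m + 2))⁻¹ - 2 * θ * ((x + θ) ^ (m + 1 + 2))⁻¹
          + θ ^ 2 * ((x + θ) ^ (m + 2 + 2))⁻¹) := by
    intro x hx
    have hx0 := mem_Ioi.mp hx
    have hx' : x + θ ≠ 0 := by positivity
    field_simp
    ring
  have hsub : IntegrableOn
      (fun a : ℝ => ((a + θ) ^ (m + 2))⁻¹ - 2 * θ * ((a + θ) ^ (m + 1 + 2))⁻¹) (Ioi 0) :=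
    (aux_int θ hθ m).sub ((aux_int θ hθ (m + 1)).const_mul (2 * θ))
  rw [setIntegral_congr_fun measurableSet_Ioi h1, integral_const_mul,
    integral_add hsub ((aux_int θ hθ (m + 2)).const_mul (θ ^ 2)),
    integral_sub (aux_int θ hθ m) ((aux_int θ hθ (m + 1)).const_mul (2 * θ)),
    integral_const_mul, integral_const_mul, aux_eq θ hθ m, aux_eq θ hθ (m + 1),
    aux_eq θ hθ (m + 2)]
  push_cast
  ring_nf

lemma lomax_variance (m : ℕ) (θ : ℝ) (hθ : 0 < θ) :
    (∫ x in Ioi (0:ℝ), x ^ 2 * (((m:ℝ) + 3) * θ ^ (m + 3) / (x + θ) ^ (m + 4)))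
      - (∫ x in Ioi (0:ℝ), x * (((m:ℝ) + 3) * θ ^ (m + 3) / (x + θ) ^ (m + 4))) ^ 2
      = ((m:ℝ) + 3) * θ ^ 2 / (((m:ℝ) + 2) ^ 2 * ((m:ℝ) + 1)) := by
  rw [first_moment m θ _ hθ, second_moment m θ _ hθ]
  have h0 : θ ≠ 0 := hθ.ne'
  have h1 : ((m:ℝ) + 1) ≠ 0 := by positivity
  have h2 : ((m:ℝ) + 2) ≠ 0 := by positivity
  have h3 : ((m:ℝ) + 3) ≠ 0 := by positivity
  field_simp
  ring

/-- The variance of a post-retargeting blocktime (Lomax(N, θ), θ = Nβ/δ) equals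
N³β²/((N-1)²(N-2)δ²), which for δ = 1 strictly exceeds β², for all integers N > 2. -/
theorem retarget_blocktime_variance (N : ℕ) (hN : 2 < N) (β δ : ℝ) (hβ : 0 < β) (hδ : 0 < δ) :
    ((∫ x in Ioi (0:ℝ), x ^ 2 * (N * (N * β / δ) ^ N / (x + N * β / δ) ^ (N + 1)))
      - (∫ x in Ioi (0:ℝ), x * (N * (N * β / δ) ^ N / (x + N * β / δ) ^ (N + 1))) ^ 2
      = N ^ 3 * β ^ 2 / ((N - 1) ^ 2 * (N - 2) * δ ^ 2)) ∧
    (δ = 1 → N ^ 3 * β ^ 2 / ((N - 1) ^ 2 * (N - 2) * δ ^ 2) > β ^ 2) := by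
  obtain ⟨m, rfl⟩ : ∃ m, N = m + 3 := ⟨N - 3, by omega⟩
  have hθ : 0 < ((m:ℝ) + 3) * β / δ := by positivity
  constructor
  · have key := lomax_variance m (((m:ℝ) + 3) * β / δ) hθ
    push_cast
    rw [show m + 3 + 1 = m + 4 from rfl, key,
      show ((m:ℝ) + 3 - 1) = (m:ℝ) + 2 by ring, show ((m:ℝ) + 3 - 2) = (m:ℝ) + 1 by ring]
    have h0 : δ ≠ 0 := hδ.ne'
    have h1 : ((m:ℝ) + 1) ≠ 0 := by positivity
    have h2 : ((m:ℝ) + 2) ≠ 0 := by positivity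
    field_simp
  · intro h
    subst h
    push_cast
    rw [show ((m:ℝ) + 3 - 1) = (m:ℝ) + 2 by ring, show ((m:ℝ) + 3 - 2) = (m:ℝ) + 1 by ring,
      one_pow, mul_one, gt_iff_lt, lt_div_iff₀ (by positivity)]
    nlinarith [Nat.cast_nonneg (α := ℝ) m, hβ, sq_nonneg ((m:ℝ)), mul_pos hβ hβ]
end

section
/- Let λ₁ > 0 and define recursively λ_{n+1} = λ_n T_n/(Nβ), where conditionally on λ_n, T_n ~ Erlang(N, λ_n), and δ_n = 1. Then for every n ≥ 2, the marginal distribution of λ_n is Erlang(N, Nβ), independent of n and of λ₁. -/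
open MeasureTheory ProbabilityTheory Real

lemma my_gammaPDF_scale {a r c : ℝ} (ha : 0 < a) (hr : 0 < r) (hc : 0 < c) (x : ℝ) :
    gammaPDF a r x = ENNReal.ofReal c * gammaPDF a (r / c) (c * x) := by
  rcases le_or_gt 0 x with hx | hx
  · rw [gammaPDF_of_nonneg hx, gammaPDF_of_nonneg (by positivity : (0:ℝ) ≤ c * x),
      ← ENNReal.ofReal_mul hc.le]
    congr 1
    have h1 : r / c * (c * x) = r * x := by field_simp
    rw [h1, Real.mul_rpow hc.le hx, Real.div_rpow hr.le hc.le]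
    have h2 : c * c ^ (a - 1 : ℝ) = c ^ (a : ℝ) := by
      have h := Real.rpow_add hc 1 (a - 1)
      rw [Real.rpow_one] at h
      rw [← h]; norm_num
    have hca : (c : ℝ) ^ (a : ℝ) ≠ 0 := (Real.rpow_pos_of_pos hc a).ne'
    have hΓ : Real.Gamma a ≠ 0 := (Real.Gamma_pos_of_pos ha).ne'
    field_simp
    linear_combination (x ^ (a-1:ℝ)) * h2.symm
  · rw [gammaPDF_of_neg hx, gammaPDF_of_neg (by nlinarith : c * x < 0), mul_zero]

lemma my_gamma_scale {a r c : ℝ} (ha : 0 < a) (hr : 0 < r) (hc : 0 < c) :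
    (gammaMeasure a r).map (fun t => c * t) = gammaMeasure a (r / c) := by
  ext s hs
  rw [Measure.map_apply (measurable_const_mul c) hs, gammaMeasure, gammaMeasure,
    withDensity_apply _ (hs.preimage (measurable_const_mul c)), withDensity_apply _ hs]
  have hmeas : Measurable (gammaPDF a (r / c)) :=
    (measurable_gammaPDFReal a (r / c)).ennreal_ofReal
  have hvol : (volume : Measure ℝ) =
      ENNReal.ofReal c • Measure.map (fun x => c * x) volume := by
    rw [Real.map_volume_mul_left hc.ne', smul_smul, ← ENNReal.ofReal_mul hc.le,
      abs_of_pos (inv_pos.mpr hc), mul_inv_cancel₀ hc.ne']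
    simp
  conv_rhs => rw [hvol]
  rw [Measure.restrict_smul, lintegral_smul_measure,
    Measure.restrict_map (measurable_const_mul c) hs,
    lintegral_map hmeas (measurable_const_mul c), smul_eq_mul,
    ← lintegral_const_mul _ (show Measurable fun x : ℝ => gammaPDF a (r / c) (c * x) from
      hmeas.comp (measurable_const_mul c))]
  exact lintegral_congr fun x => my_gammaPDF_scale ha hr hc x

lemma my_gamma_ae_pos {a r : ℝ} : ∀ᵐ l ∂(gammaMeasure a r), 0 < l := by
  rw [ae_iff]
  have h : {l : ℝ | ¬ 0 < l} = Set.Iic 0 := by ext l; simp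
  rw [h, gammaMeasure, withDensity_apply _ measurableSet_Iic,
    setLIntegral_congr (Iio_ae_eq_Iic (a := (0:ℝ))).symm,
    lintegral_gammaPDF_of_nonpos le_rfl]

lemma my_bind_congr {α β : Type*} [MeasurableSpace α] [MeasurableSpace β]
    {m : Measure α} {f g : α → Measure β} (h : f =ᵐ[m] g) : m.bind f = m.bind g := by
  simp only [Measure.bind, Measure.map_congr h]

/-- Under the Bitcoin retargeting recursion λ_{n+1} = λ_n T_n/(Nβ) with
T_n | λ_n ~ Erlang(N, λ_n) and constant hashrate, the marginal law of λ_n is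
Erlang(N, Nβ) for every n ≥ 2, independently of n and of the initial rate λ₁. -/
theorem retarget_rate_stationary (N : ℕ) (hN : 1 ≤ N) (β : ℝ) (hβ : 0 < β)
    (l₁ : ℝ) (hl₁ : 0 < l₁) (μ : ℕ → Measure ℝ)
    (h1 : μ 1 = Measure.dirac l₁)
    (hrec : ∀ n ≥ 1, μ (n + 1)
      = (μ n).bind (fun l => (gammaMeasure N l).map (fun t => l * t / (N * β)))) :
    ∀ n ≥ 2, μ n = gammaMeasure N (N * β) := by
  have hNpos : (0:ℝ) < N := by exact_mod_cast hN
  have hNβ : (0:ℝ) < N * β := by positivity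
  set γ : Measure ℝ := gammaMeasure N (N * β) with hγ
  have hγprob : IsProbabilityMeasure γ := isProbabilityMeasure_gammaMeasure hNpos hNβ
  have key : ∀ l : ℝ, 0 < l →
      (gammaMeasure N l).map (fun t => l * t / (N * β)) = γ := by
    intro l hl
    have hfun : (fun t : ℝ => l * t / (N * β)) = fun t => (l / (N * β)) * t := by
      funext t; ring
    rw [hfun, my_gamma_scale hNpos hl (by positivity)]
    congr 1
    field_simp
  intro n hn
  induction n, hn using Nat.le_induction with
  | base =>
    rw [show (2:ℕ) = 1 + 1 from rfl, hrec 1 le_rfl, h1]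
    have hae : (fun l => (gammaMeasure (N:ℝ) l).map (fun t => l * t / (N * β)))
        =ᵐ[Measure.dirac l₁] fun _ => γ := by
      rw [Filter.EventuallyEq, MeasureTheory.ae_dirac_eq]
      exact Filter.eventually_pure.mpr (key l₁ hl₁)
    rw [my_bind_congr hae, Measure.bind_const, measure_univ, one_smul]
  | succ n hn ih =>
    rw [hrec n (by omega), ih]
    have hae : (fun l => (gammaMeasure (N:ℝ) l).map (fun t => l * t / (N * β)))
        =ᵐ[γ] fun _ => γ := by
      filter_upwards [my_gamma_ae_pos] with l hl using key l hl
    rw [my_bind_congr hae, Measure.bind_const, measure_univ, one_smul]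
end
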